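/- At every point (Θ, r_1, …, r_L) where λ_0^2 + λ_1^2 r_1^2 + ⋯ + λ_L^2 r_L^2 > 0, the coordinate mean curvature vector of F vanishes: Σ_{a,b} ∂_a(√det G · G^{ab} ∂_b F) = 0, where G is the metric induced by F in the coordinates (Θ, r_1, …, r_L). Hence the Barbosa–Dajczer–Jorge ruled submanifold H_Λ, swept out from an L-dimensional plane by the multi-screw motion with pitch vector Λ, is a minimal submanifold of ℝ^{2L+1}. (Example 3.5; the case N = 0 of Theorem 3.1.) -/

import Mathlib

open scoped BigOperators

/-- Partial derivative of `f` in the `i`-th coordinate direction. -/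
noncomputable def pd {ι : Type*} [Fintype ι] [DecidableEq ι]
    {F : Type*} [NormedAddCommGroup F] [NormedSpace ℝ F]
    (i : ι) (f : EuclideanSpace ℝ ι → F) (u : EuclideanSpace ℝ ι) : F :=
  fderiv ℝ f u (EuclideanSpace.single i 1)

namespace BDJ

variable {ι : Type*} [Fintype ι] [DecidableEq ι]
variable {F : Type*} [NormedAddCommGroup F] [NormedSpace ℝ F]

lemma pd_const (i : ι) (c : F) (u : EuclideanSpace ℝ ι) : pd i (fun _ => c) u = 0 := by
  simp [pd]

lemma pd_add {f g : EuclideanSpace ℝ ι → F} {u} (i : ι)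
    (hf : DifferentiableAt ℝ f u) (hg : DifferentiableAt ℝ g u) :
    pd i (fun q => f q + g q) u = pd i f u + pd i g u := by
  simp [pd, fderiv_fun_add hf hg]

lemma pd_sum {κ : Type*} {s : Finset κ} {f : κ → EuclideanSpace ℝ ι → F} {u} (i : ι)
    (hf : ∀ t ∈ s, DifferentiableAt ℝ (f t) u) :
    pd i (fun q => ∑ t ∈ s, f t q) u = ∑ t ∈ s, pd i (f t) u := by
  simp [pd, fderiv_fun_sum hf]

lemma pd_coord (i j : ι) (u : EuclideanSpace ℝ ι) :
    pd i (fun q => q j) u = if j = i then 1 else 0 := by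
  have : (fun q : EuclideanSpace ℝ ι => q j) = (EuclideanSpace.proj j : _ →L[ℝ] ℝ) := rfl
  rw [pd, this, ContinuousLinearMap.fderiv]
  simp [EuclideanSpace.single_apply]

lemma pd_mul {f g : EuclideanSpace ℝ ι → ℝ} {u} (i : ι)
    (hf : DifferentiableAt ℝ f u) (hg : DifferentiableAt ℝ g u) :
    pd i (fun q => f q * g q) u = pd i f u * g u + f u * pd i g u := by
  simp only [pd, fderiv_fun_mul hf hg]
  simp [smul_eq_mul]; ring

lemma pd_const_mul {f : EuclideanSpace ℝ ι → ℝ} {u} (i : ι) (c : ℝ)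
    (hf : DifferentiableAt ℝ f u) :
    pd i (fun q => c * f q) u = c * pd i f u := by
  simp [pd, fderiv_const_mul hf c]

lemma pd_smul {c : EuclideanSpace ℝ ι → ℝ} {f : EuclideanSpace ℝ ι → F} {u} (i : ι)
    (hc : DifferentiableAt ℝ c u) (hf : DifferentiableAt ℝ f u) :
    pd i (fun q => c q • f q) u = pd i c u • f u + c u • pd i f u := by
  simp only [pd, fderiv_fun_smul hc hf]
  simp [add_comm]

lemma pd_smul_const {c : EuclideanSpace ℝ ι → ℝ} {u} (i : ι)
    (hc : DifferentiableAt ℝ c u) (v : F) :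
    pd i (fun q => c q • v) u = pd i c u • v := by
  simp only [pd, (hc.hasFDerivAt.smul_const v).fderiv]
  simp

lemma pd_cos {f : EuclideanSpace ℝ ι → ℝ} {u} (i : ι) (hf : DifferentiableAt ℝ f u) :
    pd i (fun q => Real.cos (f q)) u = -Real.sin (f u) * pd i f u := by
  have h : HasFDerivAt (fun q => Real.cos (f q))
      (-Real.sin (f u) • fderiv ℝ f u) u :=
    (Real.hasDerivAt_cos (f u)).comp_hasFDerivAt u hf.hasFDerivAt
  rw [pd, h.fderiv]; simp [smul_eq_mul, pd]

lemma pd_sin {f : EuclideanSpace ℝ ι → ℝ} {u} (i : ι) (hf : DifferentiableAt ℝ f u) :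
    pd i (fun q => Real.sin (f q)) u = Real.cos (f u) * pd i f u := by
  have h : HasFDerivAt (fun q => Real.sin (f q))
      (Real.cos (f u) • fderiv ℝ f u) u :=
    (Real.hasDerivAt_sin (f u)).comp_hasFDerivAt u hf.hasFDerivAt
  rw [pd, h.fderiv]; simp [smul_eq_mul, pd]

lemma pd_sqrt {f : EuclideanSpace ℝ ι → ℝ} {u} (i : ι) (hf : DifferentiableAt ℝ f u)
    (hne : f u ≠ 0) :
    pd i (fun q => Real.sqrt (f q)) u = 1 / (2 * Real.sqrt (f u)) * pd i f u := by
  have h : HasFDerivAt (fun q => Real.sqrt (f q))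
      ((1 / (2 * Real.sqrt (f u))) • fderiv ℝ f u) u :=
    (Real.hasDerivAt_sqrt hne).comp_hasFDerivAt u hf.hasFDerivAt
  rw [pd, h.fderiv]; simp [smul_eq_mul, pd]

lemma pd_inv {f : EuclideanSpace ℝ ι → ℝ} {u} (i : ι) (hf : DifferentiableAt ℝ f u)
    (hne : f u ≠ 0) :
    pd i (fun q => (f q)⁻¹) u = -(f u ^ 2)⁻¹ * pd i f u := by
  have h : HasFDerivAt (fun q => (f q)⁻¹)
      ((-(f u ^ 2)⁻¹) • fderiv ℝ f u) u :=
    (hasDerivAt_inv hne).comp_hasFDerivAt u hf.hasFDerivAt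
  rw [pd, h.fderiv]; simp [smul_eq_mul, pd]

lemma pd_congr_nhds {f g : EuclideanSpace ℝ ι → F} {u} (i : ι)
    (h : f =ᶠ[nhds u] g) : pd i f u = pd i g u := by
  rw [pd, pd, h.fderiv_eq]

lemma diff_coord (j : ι) : Differentiable ℝ (fun q : EuclideanSpace ℝ ι => q j) :=
  (EuclideanSpace.proj (𝕜 := ℝ) j).differentiable

lemma sum_apply' {κ : Type*} [Fintype κ] [DecidableEq κ] {α : Type*} {s : Finset α}
    (f : α → EuclideanSpace ℝ κ) (j : κ) :
    (∑ t ∈ s, f t) j = ∑ t ∈ s, f t j := by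
  classical
  induction s using Finset.induction_on with
  | empty => simp [PiLp.zero_apply]
  | insert a s h ih => rw [Finset.sum_insert h, Finset.sum_insert h, PiLp.add_apply, ih]

end BDJ
namespace Helico

open BDJ Real

variable {L : ℕ} (lam0 : ℝ) (lam : Fin L → ℝ)

abbrev Dom (L : ℕ) := EuclideanSpace ℝ (Unit ⊕ Fin L)
abbrev Amb (L : ℕ) := EuclideanSpace ℝ ((Fin L × Bool) ⊕ Unit)

noncomputable def Ec (t : Fin L) : Amb L := EuclideanSpace.single (Sum.inl (t, false)) 1
noncomputable def Es (t : Fin L) : Amb L := EuclideanSpace.single (Sum.inl (t, true)) 1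
noncomputable def Ez : Amb L := EuclideanSpace.single (Sum.inr ()) 1

noncomputable def phi (q : Dom L) : ℝ :=
  lam0 ^ 2 + ∑ t : Fin L, lam t ^ 2 * q (Sum.inr t) ^ 2

noncomputable def Fexp (q : Dom L) : Amb L :=
  (∑ t : Fin L, ((q (Sum.inr t) * Real.cos (lam t * q (Sum.inl ()))) • Ec t
    + (q (Sum.inr t) * Real.sin (lam t * q (Sum.inl ()))) • Es t))
  + (lam0 * q (Sum.inl ())) • Ez

noncomputable def DTh (q : Dom L) : Amb L :=
  (∑ t : Fin L, ((-(q (Sum.inr t) * (lam t * Real.sin (lam t * q (Sum.inl ()))))) • Ec t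
    + (q (Sum.inr t) * (lam t * Real.cos (lam t * q (Sum.inl ())))) • Es t))
  + lam0 • Ez

noncomputable def DDTh (q : Dom L) : Amb L :=
  ∑ t : Fin L, ((-(q (Sum.inr t) * (lam t * (lam t * Real.cos (lam t * q (Sum.inl ())))))) • Ec t
    + (-(q (Sum.inr t) * (lam t * (lam t * Real.sin (lam t * q (Sum.inl ())))))) • Es t)

noncomputable def Dr (s : Fin L) (q : Dom L) : Amb L :=
  Real.cos (lam s * q (Sum.inl ())) • Ec s + Real.sin (lam s * q (Sum.inl ())) • Es s

/- Differentiability -/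

lemma diff_lin (t : Fin L) (c : ℝ) :
    Differentiable ℝ (fun q : Dom L => c * q (Sum.inl ())) :=
  (diff_coord _).const_mul c

lemma diff_ct (t : Fin L) :
    Differentiable ℝ (fun q : Dom L => q (Sum.inr t) * Real.cos (lam t * q (Sum.inl ()))) :=
  (diff_coord _).mul (Real.differentiable_cos.comp ((diff_coord _).const_mul (lam t)))

lemma diff_st (t : Fin L) :
    Differentiable ℝ (fun q : Dom L => q (Sum.inr t) * Real.sin (lam t * q (Sum.inl ()))) :=
  (diff_coord _).mul (Real.differentiable_sin.comp ((diff_coord _).const_mul (lam t)))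

lemma diff_cos (t : Fin L) :
    Differentiable ℝ (fun q : Dom L => Real.cos (lam t * q (Sum.inl ()))) :=
  Real.differentiable_cos.comp ((diff_coord _).const_mul (lam t))

lemma diff_sin (t : Fin L) :
    Differentiable ℝ (fun q : Dom L => Real.sin (lam t * q (Sum.inl ()))) :=
  Real.differentiable_sin.comp ((diff_coord _).const_mul (lam t))

lemma diff_Fexp : Differentiable ℝ (Fexp lam0 lam : Dom L → Amb L) := by
  unfold Fexp
  exact (Differentiable.fun_sum fun t _ =>
      ((diff_ct lam t).smul_const _).add ((diff_st lam t).smul_const _)).add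
    (((diff_coord _).const_mul lam0).smul_const _)

lemma diff_DTh : Differentiable ℝ (DTh lam0 lam : Dom L → Amb L) := by
  unfold DTh
  refine Differentiable.add (Differentiable.fun_sum fun t _ => Differentiable.add ?_ ?_)
    (differentiable_const _)
  · exact (((diff_coord _).mul
      ((diff_sin lam t).const_mul (lam t))).neg).smul_const _
  · exact ((diff_coord _).mul ((diff_cos lam t).const_mul (lam t))).smul_const _

lemma diff_Dr (s : Fin L) : Differentiable ℝ (Dr lam s : Dom L → Amb L) := by
  unfold Dr
  exact ((diff_cos lam s).smul_const _).add ((diff_sin lam s).smul_const _)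

lemma diff_sq : Differentiable ℝ (fun q : Dom L => ∑ t : Fin L, lam t ^ 2 * q (Sum.inr t) ^ 2) :=
  Differentiable.fun_sum fun t _ => (((diff_coord _).pow 2).const_mul _)

lemma diff_phi : Differentiable ℝ (phi lam0 lam : Dom L → ℝ) := by
  unfold phi
  exact (differentiable_const _).add (diff_sq lam)

/- pd of scalar pieces -/

lemma pd_lin (i : Unit ⊕ Fin L) (c : ℝ) (q : Dom L) :
    pd i (fun q : Dom L => c * q (Sum.inl ())) q
      = c * (if (Sum.inl () : Unit ⊕ Fin L) = i then 1 else 0) := by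
  rw [pd_const_mul i c ((diff_coord _).differentiableAt), pd_coord]

lemma pd_ct (t : Fin L) (i : Unit ⊕ Fin L) (q : Dom L) :
    pd i (fun q : Dom L => q (Sum.inr t) * Real.cos (lam t * q (Sum.inl ()))) q
      = (if (Sum.inr t : Unit ⊕ Fin L) = i then 1 else 0) * Real.cos (lam t * q (Sum.inl ()))
        + q (Sum.inr t) * (-Real.sin (lam t * q (Sum.inl ()))
            * (lam t * (if (Sum.inl () : Unit ⊕ Fin L) = i then 1 else 0))) := by
  rw [pd_mul i ((diff_coord _).differentiableAt)
    ((diff_cos lam t).differentiableAt), pd_coord,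
    pd_cos i (((diff_coord _).const_mul (lam t)).differentiableAt), pd_lin]

lemma pd_st (t : Fin L) (i : Unit ⊕ Fin L) (q : Dom L) :
    pd i (fun q : Dom L => q (Sum.inr t) * Real.sin (lam t * q (Sum.inl ()))) q
      = (if (Sum.inr t : Unit ⊕ Fin L) = i then 1 else 0) * Real.sin (lam t * q (Sum.inl ()))
        + q (Sum.inr t) * (Real.cos (lam t * q (Sum.inl ()))
            * (lam t * (if (Sum.inl () : Unit ⊕ Fin L) = i then 1 else 0))) := by
  rw [pd_mul i ((diff_coord _).differentiableAt)
    ((diff_sin lam t).differentiableAt), pd_coord,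
    pd_sin i (((diff_coord _).const_mul (lam t)).differentiableAt), pd_lin]

lemma pd_phi (i : Unit ⊕ Fin L) (q : Dom L) :
    pd i (phi lam0 lam) q
      = Sum.elim (fun _ => (0:ℝ)) (fun s => 2 * lam s ^ 2 * q (Sum.inr s)) i := by
  unfold phi
  rw [pd_add (f := fun _ => lam0 ^ 2)
    (g := fun q : Dom L => ∑ t : Fin L, lam t ^ 2 * q (Sum.inr t) ^ 2) i
    (differentiableAt_const _) ((diff_sq lam).differentiableAt (x := q)),
    pd_const, pd_sum (f := fun (t : Fin L) (q : Dom L) => lam t ^ 2 * q (Sum.inr t) ^ 2) i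
      (fun t _ => (((diff_coord _).pow 2).const_mul _).differentiableAt)]
  have hsq : ∀ t : Fin L, pd i (fun q : Dom L => lam t ^ 2 * q (Sum.inr t) ^ 2) q
      = lam t ^ 2 * ((if (Sum.inr t : Unit ⊕ Fin L) = i then 1 else 0) * q (Sum.inr t)
          + q (Sum.inr t) * (if (Sum.inr t : Unit ⊕ Fin L) = i then 1 else 0)) := by
    intro t
    have : (fun q : Dom L => lam t ^ 2 * q (Sum.inr t) ^ 2)
        = fun q : Dom L => lam t ^ 2 * (q (Sum.inr t) * q (Sum.inr t)) := by
      funext q; ring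
    rw [this, pd_const_mul i _ (((diff_coord _).fun_mul (diff_coord _)).differentiableAt),
      pd_mul i ((diff_coord _).differentiableAt) ((diff_coord _).differentiableAt), pd_coord]
  simp only [hsq]
  rcases i with u | s
  · simp
  · rw [Finset.sum_eq_single s]
    · simp; ring
    · intro t _ hts
      simp [Sum.inr.injEq, hts]
    · simp

/- pd of Fexp -/

lemma pdF_inl (q : Dom L) : pd (Sum.inl ()) (Fexp lam0 lam) q = DTh lam0 lam q := by
  unfold Fexp
  rw [pd_add _ ((Differentiable.fun_sum fun t _ =>
      ((diff_ct lam t).smul_const _).fun_add ((diff_st lam t).smul_const _)).differentiableAt)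
    ((((diff_coord _).const_mul lam0).smul_const _).differentiableAt),
    pd_sum _ (fun t _ => (((diff_ct lam t).smul_const _).fun_add
      ((diff_st lam t).smul_const _)).differentiableAt),
    pd_smul_const _ (((diff_coord _).const_mul lam0).differentiableAt)]
  have hterm : ∀ t : Fin L,
      pd (Sum.inl ()) (fun q : Dom L =>
        (q (Sum.inr t) * Real.cos (lam t * q (Sum.inl ()))) • Ec t
          + (q (Sum.inr t) * Real.sin (lam t * q (Sum.inl ()))) • Es t) q
      = (-(q (Sum.inr t) * (lam t * Real.sin (lam t * q (Sum.inl ()))))) • Ec t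
          + (q (Sum.inr t) * (lam t * Real.cos (lam t * q (Sum.inl ())))) • Es t := by
    intro t
    rw [pd_add _ (((diff_ct lam t).smul_const _).differentiableAt)
        (((diff_st lam t).smul_const _).differentiableAt),
      pd_smul_const _ ((diff_ct lam t).differentiableAt),
      pd_smul_const _ ((diff_st lam t).differentiableAt),
      pd_ct, pd_st]
    simp
    module
  simp only [hterm, pd_lin]
  unfold DTh
  simp

lemma pdF_inr (s : Fin L) (q : Dom L) :
    pd (Sum.inr s) (Fexp lam0 lam) q = Dr lam s q := by
  unfold Fexp
  rw [pd_add _ ((Differentiable.fun_sum fun t _ =>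
      ((diff_ct lam t).smul_const _).fun_add ((diff_st lam t).smul_const _)).differentiableAt)
    ((((diff_coord _).const_mul lam0).smul_const _).differentiableAt),
    pd_sum _ (fun t _ => (((diff_ct lam t).smul_const _).fun_add
      ((diff_st lam t).smul_const _)).differentiableAt),
    pd_smul_const _ (((diff_coord _).const_mul lam0).differentiableAt)]
  have hterm : ∀ t : Fin L,
      pd (Sum.inr s) (fun q : Dom L =>
        (q (Sum.inr t) * Real.cos (lam t * q (Sum.inl ()))) • Ec t
          + (q (Sum.inr t) * Real.sin (lam t * q (Sum.inl ()))) • Es t) q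
      = ((if t = s then (1:ℝ) else 0) * Real.cos (lam t * q (Sum.inl ()))) • Ec t
          + ((if t = s then (1:ℝ) else 0) * Real.sin (lam t * q (Sum.inl ()))) • Es t := by
    intro t
    rw [pd_add _ (((diff_ct lam t).smul_const _).differentiableAt)
        (((diff_st lam t).smul_const _).differentiableAt),
      pd_smul_const _ ((diff_ct lam t).differentiableAt),
      pd_smul_const _ ((diff_st lam t).differentiableAt),
      pd_ct, pd_st]
    simp only [if_neg (by simp : ¬ (Sum.inl () : Unit ⊕ Fin L) = Sum.inr s),
      Sum.inr.injEq, mul_zero, zero_mul, add_zero, mul_one]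
  simp only [hterm, pd_lin]
  rw [Finset.sum_eq_single s]
  · unfold Dr; simp
  · intro t _ hts
    simp [hts]
  · simp

/- pd of DTh and Dr -/

lemma pd_DTh_inl (q : Dom L) :
    pd (Sum.inl ()) (DTh lam0 lam) q = DDTh lam q := by
  unfold DTh
  rw [pd_add _ ((Differentiable.fun_sum fun t _ => Differentiable.fun_add
      ((((diff_coord _).fun_mul ((diff_sin lam t).const_mul (lam t))).fun_neg).smul_const _)
      (((diff_coord _).fun_mul ((diff_cos lam t).const_mul (lam t))).smul_const _)).differentiableAt)
    (differentiableAt_const _), pd_const, add_zero,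
    pd_sum _ (fun t _ => (Differentiable.fun_add
      ((((diff_coord _).fun_mul ((diff_sin lam t).const_mul (lam t))).fun_neg).smul_const _)
      (((diff_coord _).fun_mul ((diff_cos lam t).const_mul (lam t))).smul_const _)).differentiableAt)]
  unfold DDTh
  refine Finset.sum_congr rfl fun t _ => ?_
  rw [pd_add _ ((((diff_coord _).fun_mul ((diff_sin lam t).const_mul (lam t))).fun_neg).smul_const
        _).differentiableAt
      ((((diff_coord _).fun_mul ((diff_cos lam t).const_mul (lam t))).smul_const
        _).differentiableAt),
    pd_smul_const _ (((diff_coord _).fun_mul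
      ((diff_sin lam t).const_mul (lam t))).fun_neg.differentiableAt),
    pd_smul_const _ (((diff_coord _).fun_mul
      ((diff_cos lam t).const_mul (lam t))).differentiableAt)]
  have h1 : pd (Sum.inl ()) (fun q : Dom L =>
      -(q (Sum.inr t) * (lam t * Real.sin (lam t * q (Sum.inl ()))))) q
      = -(q (Sum.inr t) * (lam t * (lam t * Real.cos (lam t * q (Sum.inl ()))))) := by
    have hrw : (fun q : Dom L => -(q (Sum.inr t) * (lam t * Real.sin (lam t * q (Sum.inl ())))))
        = fun q : Dom L => (-(lam t)) * (q (Sum.inr t) * Real.sin (lam t * q (Sum.inl ()))) := by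
      funext q; ring
    rw [hrw, pd_const_mul _ _ ((diff_st lam t).differentiableAt), pd_st]
    simp
    ring
  have h2 : pd (Sum.inl ()) (fun q : Dom L =>
      q (Sum.inr t) * (lam t * Real.cos (lam t * q (Sum.inl ())))) q
      = -(q (Sum.inr t) * (lam t * (lam t * Real.sin (lam t * q (Sum.inl ()))))) := by
    have hrw : (fun q : Dom L => q (Sum.inr t) * (lam t * Real.cos (lam t * q (Sum.inl ()))))
        = fun q : Dom L => (lam t) * (q (Sum.inr t) * Real.cos (lam t * q (Sum.inl ()))) := by
      funext q; ring
    rw [hrw, pd_const_mul _ _ ((diff_ct lam t).differentiableAt), pd_ct]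
    simp
    ring
  rw [h1, h2]

lemma pd_Dr_inr (s : Fin L) (q : Dom L) :
    pd (Sum.inr s) (Dr lam s) q = 0 := by
  unfold Dr
  rw [pd_add _ (((diff_cos lam s).smul_const _).differentiableAt)
      (((diff_sin lam s).smul_const _).differentiableAt),
    pd_smul_const _ ((diff_cos lam s).differentiableAt),
    pd_smul_const _ ((diff_sin lam s).differentiableAt),
    pd_cos _ (((diff_coord _).const_mul (lam s)).differentiableAt),
    pd_sin _ (((diff_coord _).const_mul (lam s)).differentiableAt), pd_lin]
  simp

end Helico

namespace Helico

open BDJ Real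

variable {L : ℕ} (lam0 : ℝ) (lam : Fin L → ℝ)

/- component lemmas -/

lemma Fexp_apply_cos (q : Dom L) (t : Fin L) :
    Fexp lam0 lam q (Sum.inl (t, false)) = q (Sum.inr t) * Real.cos (lam t * q (Sum.inl ())) := by
  unfold Fexp
  rw [PiLp.add_apply, sum_apply']
  simp [Ec, Es, Ez, EuclideanSpace.single_apply]

lemma Fexp_apply_sin (q : Dom L) (t : Fin L) :
    Fexp lam0 lam q (Sum.inl (t, true)) = q (Sum.inr t) * Real.sin (lam t * q (Sum.inl ())) := by
  unfold Fexp
  rw [PiLp.add_apply, sum_apply']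
  simp [Ec, Es, Ez, EuclideanSpace.single_apply]

lemma Fexp_apply_z (q : Dom L) (u : Unit) :
    Fexp lam0 lam q (Sum.inr u) = lam0 * q (Sum.inl ()) := by
  cases u; unfold Fexp
  rw [PiLp.add_apply, sum_apply']
  simp [Ec, Es, Ez, EuclideanSpace.single_apply]

lemma DTh_apply_cos (q : Dom L) (t : Fin L) :
    DTh lam0 lam q (Sum.inl (t, false))
      = -(q (Sum.inr t) * (lam t * Real.sin (lam t * q (Sum.inl ())))) := by
  unfold DTh
  rw [PiLp.add_apply, sum_apply']
  simp [Ec, Es, Ez, EuclideanSpace.single_apply]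

lemma DTh_apply_sin (q : Dom L) (t : Fin L) :
    DTh lam0 lam q (Sum.inl (t, true))
      = q (Sum.inr t) * (lam t * Real.cos (lam t * q (Sum.inl ()))) := by
  unfold DTh
  rw [PiLp.add_apply, sum_apply']
  simp [Ec, Es, Ez, EuclideanSpace.single_apply]

lemma DTh_apply_z (q : Dom L) (u : Unit) : DTh lam0 lam q (Sum.inr u) = lam0 := by
  cases u; unfold DTh
  rw [PiLp.add_apply, sum_apply']
  simp [Ec, Es, Ez, EuclideanSpace.single_apply]

lemma Dr_apply_cos (s : Fin L) (q : Dom L) (t : Fin L) :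
    Dr lam s q (Sum.inl (t, false))
      = if t = s then Real.cos (lam s * q (Sum.inl ())) else 0 := by
  unfold Dr
  rw [PiLp.add_apply]
  simp [Ec, Es, Ez, EuclideanSpace.single_apply, eq_comm]

lemma Dr_apply_sin (s : Fin L) (q : Dom L) (t : Fin L) :
    Dr lam s q (Sum.inl (t, true))
      = if t = s then Real.sin (lam s * q (Sum.inl ())) else 0 := by
  unfold Dr
  rw [PiLp.add_apply]
  simp [Ec, Es, Ez, EuclideanSpace.single_apply, eq_comm]

lemma Dr_apply_z (s : Fin L) (q : Dom L) (u : Unit) : Dr lam s q (Sum.inr u) = 0 := by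
  cases u; unfold Dr
  rw [PiLp.add_apply]
  simp [Ec, Es, Ez, EuclideanSpace.single_apply]

/- inner products -/

lemma inner_DTh_DTh (q : Dom L) :
    @inner ℝ _ _ (DTh lam0 lam q) (DTh lam0 lam q) = phi lam0 lam q := by
  simp only [PiLp.inner_apply, Fintype.sum_sum_type, RCLike.inner_apply, starRingEnd_apply, star_trivial,
    Fintype.sum_prod_type, Fintype.sum_bool, Finset.univ_unique, Finset.sum_singleton,
    DTh_apply_cos, DTh_apply_sin, DTh_apply_z]
  unfold phi
  ring_nf
  simp only [Real.sin_sq]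
  ring_nf
  rw [add_comm]
  congr 1
  exact Finset.sum_congr rfl fun x _ => by ring

lemma inner_DTh_Dr (s : Fin L) (q : Dom L) :
    @inner ℝ _ _ (DTh lam0 lam q) (Dr lam s q) = 0 := by
  simp only [PiLp.inner_apply, Fintype.sum_sum_type, RCLike.inner_apply, starRingEnd_apply, star_trivial,
    Fintype.sum_prod_type, Fintype.sum_bool, Finset.univ_unique, Finset.sum_singleton,
    DTh_apply_cos, DTh_apply_sin, DTh_apply_z, Dr_apply_cos, Dr_apply_sin, Dr_apply_z,
    mul_ite, mul_zero, mul_one]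
  rw [Finset.sum_eq_single s]
  · norm_num; ring
  · intro t _ hts; simp [hts]
  · simp

lemma inner_Dr_Dr (s u : Fin L) (q : Dom L) :
    @inner ℝ _ _ (Dr lam s q) (Dr lam u q) = if s = u then (1:ℝ) else 0 := by
  simp only [PiLp.inner_apply, Fintype.sum_sum_type, RCLike.inner_apply, starRingEnd_apply, star_trivial,
    Fintype.sum_prod_type, Fintype.sum_bool, Finset.univ_unique, Finset.sum_singleton,
    Dr_apply_cos, Dr_apply_sin, Dr_apply_z, mul_zero, add_zero]
  by_cases hsu : s = u
  · subst hsu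
    rw [Finset.sum_eq_single s]
    · simp only [if_pos rfl, eq_self_iff_true, if_true]
      ring_nf
      simp only [Real.sin_sq]
      ring
    · intro t _ hts; simp [hts]
    · simp
  · rw [if_neg hsu, Finset.sum_eq_zero]
    intro t _
    by_cases hts : t = s
    · subst hts; simp [hsu]
    · simp [hts]

end Helico


open Helico BDJ

/-- Example 3.5 (the case `N = 0` of Theorem 3.1): the Barbosa–Dajczer–Jorge ruled
submanifold `H_Λ`, parameterized by
`F(Θ, r₁, …, r_L) = (r₁ cos(λ₁Θ), r₁ sin(λ₁Θ), …, r_L cos(λ_LΘ), r_L sin(λ_LΘ), λ₀Θ)`,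
has vanishing coordinate mean curvature vector at every point where
`λ₀² + λ₁²r₁² + ⋯ + λ_L²r_L² > 0`; hence it is a minimal submanifold of `ℝ^{2L+1}`.
The domain coordinates are indexed by `Unit ⊕ Fin L` (`Θ` then `r`); the ambient
coordinates by `(Fin L × Bool) ⊕ Unit`, with `(t, false)` the cosine component,
`(t, true)` the sine component, and `Unit` the last coordinate `λ₀Θ`. -/
theorem barbosa_dajczer_jorge_helicoid_minimal (L : ℕ) (hL : 1 ≤ L)
    (lam0 : ℝ) (lam : Fin L → ℝ) (hΛ : ¬(lam0 = 0 ∧ ∀ t, lam t = 0))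
    (F : EuclideanSpace ℝ (Unit ⊕ Fin L) → EuclideanSpace ℝ ((Fin L × Bool) ⊕ Unit))
    (hFcos : ∀ q (t : Fin L), F q (Sum.inl (t, false)) =
      q (Sum.inr t) * Real.cos (lam t * q (Sum.inl ())))
    (hFsin : ∀ q (t : Fin L), F q (Sum.inl (t, true)) =
      q (Sum.inr t) * Real.sin (lam t * q (Sum.inl ())))
    (hFz : ∀ q, F q (Sum.inr ()) = lam0 * q (Sum.inl ()))
    (G : EuclideanSpace ℝ (Unit ⊕ Fin L) →
      Matrix (Unit ⊕ Fin L) (Unit ⊕ Fin L) ℝ)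
    (hG : ∀ q a b, G q a b = @inner ℝ _ _ (pd a F q) (pd b F q)) :
    ∀ q : EuclideanSpace ℝ (Unit ⊕ Fin L),
      0 < lam0 ^ 2 + ∑ t : Fin L, lam t ^ 2 * q (Sum.inr t) ^ 2 →
      ∑ a, ∑ b, pd a (fun q' => (Real.sqrt (G q').det * (G q')⁻¹ a b) • pd b F q') q
        = 0 := by
  -- identify F with the explicit parameterization
  have hFeq : F = Fexp lam0 lam := by
    funext q'
    ext j
    rcases j with ⟨t, b⟩ | u
    · cases b
      · rw [hFcos, Fexp_apply_cos]
      · rw [hFsin, Fexp_apply_sin]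
    · cases u; rw [hFz, Fexp_apply_z]
  subst hFeq
  intro q hq
  have hφ : 0 < phi lam0 lam q := hq
  have hφne : phi lam0 lam q ≠ 0 := ne_of_gt hφ
  -- the metric is diagonal
  have hGdiag : ∀ q', G q'
      = Matrix.diagonal (Sum.elim (fun _ => phi lam0 lam q') (fun _ => (1:ℝ))) := by
    intro q'
    ext a b
    rw [hG]
    rcases a with u | s <;> rcases b with v | t
    · cases u; cases v
      rw [pdF_inl, inner_DTh_DTh, Matrix.diagonal_apply_eq]
      rfl
    · cases u
      rw [pdF_inl, pdF_inr, inner_DTh_Dr, Matrix.diagonal_apply_ne _ (by simp)]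
    · cases v
      rw [pdF_inl, pdF_inr, real_inner_comm, inner_DTh_Dr,
        Matrix.diagonal_apply_ne _ (by simp)]
    · rw [pdF_inr, pdF_inr, inner_Dr_Dr, Matrix.diagonal_apply]
      by_cases hst : s = t
      · subst hst; simp
      · simp [hst, Sum.inr.injEq]
  -- determinant
  have hdet : ∀ q', (G q').det = phi lam0 lam q' := by
    intro q'
    rw [hGdiag q', Matrix.det_diagonal, Fintype.prod_sum_type]
    simp
  -- off-diagonal entries of the inverse vanish everywhere
  have hoff : ∀ q' (a b : Unit ⊕ Fin L), a ≠ b → (G q')⁻¹ a b = 0 := by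
    intro q' a b hab
    rw [hGdiag q', Matrix.inv_diagonal, Matrix.diagonal_apply_ne _ hab]
  -- diagonal inverse where phi > 0
  have hinv : ∀ q', 0 < phi lam0 lam q' → (G q')⁻¹
      = Matrix.diagonal (Sum.elim (fun _ => (phi lam0 lam q')⁻¹) (fun _ => (1:ℝ))) := by
    intro q' h
    rw [hGdiag q']
    apply Matrix.inv_eq_right_inv
    have hd : (fun i : Unit ⊕ Fin L => Sum.elim (fun _ : Unit => phi lam0 lam q') (fun _ : Fin L => (1:ℝ)) i
        * Sum.elim (fun _ : Unit => (phi lam0 lam q')⁻¹) (fun _ : Fin L => (1:ℝ)) i)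
        = fun _ => (1:ℝ) := by
      funext i
      rcases i with u | s
      · simp [mul_inv_cancel₀ (ne_of_gt h)]
      · simp
    rw [Matrix.diagonal_mul_diagonal, hd, Matrix.diagonal_one]
  -- phi is eventually positive
  have hev : ∀ᶠ q' in nhds q, 0 < phi lam0 lam q' :=
    ((diff_phi lam0 lam).continuous.continuousAt).eventually (eventually_gt_nhds hφ)
  -- cross terms vanish
  have hzero : ∀ (a b : Unit ⊕ Fin L), a ≠ b →
      pd a (fun q' => (Real.sqrt ((G q').det) * (G q')⁻¹ a b)
        • pd b (Fexp lam0 lam) q') q = 0 := by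
    intro a b hab
    have hfe : (fun q' => (Real.sqrt ((G q').det) * (G q')⁻¹ a b)
        • pd b (Fexp lam0 lam) q') = fun _ => (0 : Amb L) := by
      funext q'
      rw [hoff q' a b hab, mul_zero, zero_smul]
    rw [hfe, pd_const]
  -- the (Θ,Θ) term
  have hterm1 : pd (Sum.inl ()) (fun q' => (Real.sqrt ((G q').det)
        * (G q')⁻¹ (Sum.inl ()) (Sum.inl ())) • pd (Sum.inl ()) (Fexp lam0 lam) q') q
      = (Real.sqrt (phi lam0 lam q) * (phi lam0 lam q)⁻¹) • DDTh lam q := by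
    have heq : (fun q' => (Real.sqrt ((G q').det)
          * (G q')⁻¹ (Sum.inl ()) (Sum.inl ())) • pd (Sum.inl ()) (Fexp lam0 lam) q')
        =ᶠ[nhds q] fun q' => (Real.sqrt (phi lam0 lam q') * (phi lam0 lam q')⁻¹)
          • DTh lam0 lam q' := by
      filter_upwards [hev] with q' h
      rw [hdet, hinv q' h, pdF_inl, Matrix.diagonal_apply_eq]
      rfl
    rw [pd_congr_nhds _ heq]
    have hdφ : DifferentiableAt ℝ (phi lam0 lam) q := (diff_phi lam0 lam).differentiableAt
    have hdc : DifferentiableAt ℝ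
        (fun q' => Real.sqrt (phi lam0 lam q') * (phi lam0 lam q')⁻¹) q :=
      (hdφ.sqrt hφne).mul (hdφ.inv hφne)
    rw [pd_smul _ hdc ((diff_DTh lam0 lam).differentiableAt),
      pd_mul _ (hdφ.sqrt hφne) (hdφ.fun_inv hφne),
      pd_sqrt _ hdφ hφne, pd_inv _ hdφ hφne, pd_phi, pd_DTh_inl]
    simp
  -- the (r_s, r_s) terms
  have hterm2 : ∀ s : Fin L, pd (Sum.inr s) (fun q' => (Real.sqrt ((G q').det)
        * (G q')⁻¹ (Sum.inr s) (Sum.inr s)) • pd (Sum.inr s) (Fexp lam0 lam) q') q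
      = (1 / (2 * Real.sqrt (phi lam0 lam q)) * (2 * lam s ^ 2 * q (Sum.inr s)))
          • Dr lam s q := by
    intro s
    have heq : (fun q' => (Real.sqrt ((G q').det)
          * (G q')⁻¹ (Sum.inr s) (Sum.inr s)) • pd (Sum.inr s) (Fexp lam0 lam) q')
        =ᶠ[nhds q] fun q' => Real.sqrt (phi lam0 lam q') • Dr lam s q' := by
      filter_upwards [hev] with q' h
      rw [hdet, hinv q' h, pdF_inr, Matrix.diagonal_apply_eq]
      show (Real.sqrt (phi lam0 lam q') * 1) • Dr lam s q' = _
      rw [mul_one]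
    rw [pd_congr_nhds _ heq]
    have hdφ : DifferentiableAt ℝ (phi lam0 lam) q := (diff_phi lam0 lam).differentiableAt
    rw [pd_smul _ (hdφ.sqrt hφne) ((diff_Dr lam s).differentiableAt),
      pd_sqrt _ hdφ hφne, pd_phi, pd_Dr_inr]
    simp
  -- assemble
  rw [Fintype.sum_sum_type]
  simp only [Fintype.sum_sum_type, Finset.univ_unique, Finset.sum_singleton]
  show pd (Sum.inl ()) (fun q' => (Real.sqrt (G q').det
        * (G q')⁻¹ (Sum.inl ()) (Sum.inl ())) • pd (Sum.inl ()) (Fexp lam0 lam) q') q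
      + ∑ b : Fin L, pd (Sum.inl ()) (fun q' => (Real.sqrt (G q').det
        * (G q')⁻¹ (Sum.inl ()) (Sum.inr b)) • pd (Sum.inr b) (Fexp lam0 lam) q') q
      + ∑ a : Fin L, (pd (Sum.inr a) (fun q' => (Real.sqrt (G q').det
          * (G q')⁻¹ (Sum.inr a) (Sum.inl ())) • pd (Sum.inl ()) (Fexp lam0 lam) q') q
        + ∑ b : Fin L, pd (Sum.inr a) (fun q' => (Real.sqrt (G q').det
          * (G q')⁻¹ (Sum.inr a) (Sum.inr b)) • pd (Sum.inr b) (Fexp lam0 lam) q') q) = 0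
  have hrow : ∀ a : Fin L, (pd (Sum.inr a) (fun q' => (Real.sqrt (G q').det
          * (G q')⁻¹ (Sum.inr a) (Sum.inl ())) • pd (Sum.inl ()) (Fexp lam0 lam) q') q
        + ∑ b : Fin L, pd (Sum.inr a) (fun q' => (Real.sqrt (G q').det
          * (G q')⁻¹ (Sum.inr a) (Sum.inr b)) • pd (Sum.inr b) (Fexp lam0 lam) q') q)
      = (1 / (2 * Real.sqrt (phi lam0 lam q)) * (2 * lam a ^ 2 * q (Sum.inr a)))
          • Dr lam a q := by
    intro a
    rw [hzero (Sum.inr a) (Sum.inl ()) (by simp), zero_add,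
      Finset.sum_eq_single a (fun b _ hba => hzero (Sum.inr a) (Sum.inr b)
        (by simp [Ne.symm hba])) (by simp), hterm2 a]
  rw [hterm1,
    Finset.sum_congr rfl (fun (b : Fin L) _ => hzero (Sum.inl ()) (Sum.inr b) (by simp)),
    Finset.sum_congr rfl (fun (a : Fin L) _ => hrow a)]
  rw [Finset.sum_const_zero, add_zero]
  -- final algebra
  have hsne : Real.sqrt (phi lam0 lam q) ≠ 0 := by
    positivity
  have hc1 : Real.sqrt (phi lam0 lam q) * (phi lam0 lam q)⁻¹
      = (Real.sqrt (phi lam0 lam q))⁻¹ := by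
    rw [← Real.mul_self_sqrt hφ.le]
    field_simp
    rw [Real.sqrt_sq (Real.sqrt_nonneg _)]
  have hc2 : ∀ s : Fin L, 1 / (2 * Real.sqrt (phi lam0 lam q)) * (2 * lam s ^ 2 * q (Sum.inr s))
      = (Real.sqrt (phi lam0 lam q))⁻¹ * (lam s ^ 2 * q (Sum.inr s)) := by
    intro s
    field_simp
  rw [hc1]
  simp only [hc2]
  unfold DDTh Dr
  rw [Finset.smul_sum, ← Finset.sum_add_distrib]
  rw [Finset.sum_eq_zero]
  intro t _
  set u := (Real.sqrt (phi lam0 lam q))⁻¹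
  set cs := Real.cos (lam t * q (Sum.inl ()))
  set sn := Real.sin (lam t * q (Sum.inl ()))
  set r := q (Sum.inr t)
  module
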